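/- Let d ≥ 1, δ ∈ (0, 1/2], and let A_1, …, A_d ∈ M_n(ℂ) form a fuzzy d-torus of width δ. Then ∑_{j=1}^d Im(A_j)² + ((d−1)·1 − ∑_{j=1}^d Re(A_j))² ≥ (1 − 15·d²·δ)·1 in the Loewner order. -/

import Mathlib

open Matrix
open scoped Matrix.Norms.L2Operator ComplexOrder

noncomputable section

/-- The "real part" `(A + A*)/2` of a square complex matrix. -/
def mRe {n : ℕ} (A : Matrix (Fin n) (Fin n) ℂ) : Matrix (Fin n) (Fin n) ℂ :=
  (1/2 : ℂ) • (A + Aᴴ)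

/-- The "imaginary part" `(A - A*)/(2i)` of a square complex matrix. -/
def mIm {n : ℕ} (A : Matrix (Fin n) (Fin n) ℂ) : Matrix (Fin n) (Fin n) ℂ :=
  (1/(2 * Complex.I) : ℂ) • (A - Aᴴ)

namespace Stmt19Aux

variable {n d : ℕ}

/-! ### Generic facts about the `ℓ²`-operator norm and positive semidefiniteness -/

lemma norm_one_le' : ‖(1 : Matrix (Fin n) (Fin n) ℂ)‖ ≤ 1 := by
  rw [Matrix.cstar_norm_def, _root_.map_one]
  exact ContinuousLinearMap.norm_id_le

lemma norm_mul_le_of_le {X Y : Matrix (Fin n) (Fin n) ℂ} {a b : ℝ}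
    (hX : ‖X‖ ≤ a) (hY : ‖Y‖ ≤ b) : ‖X * Y‖ ≤ a * b :=
  le_trans (norm_mul_le _ _)
    (mul_le_mul hX hY (norm_nonneg _) (le_trans (norm_nonneg _) hX))

lemma normH_le {X : Matrix (Fin n) (Fin n) ℂ} {a : ℝ} (hX : ‖X‖ ≤ a) : ‖Xᴴ‖ ≤ a := by
  rw [Matrix.l2_opNorm_conjTranspose]; exact hX

lemma abs_form_le (M : Matrix (Fin n) (Fin n) ℂ) (x : Fin n → ℂ) :
    ‖star x ⬝ᵥ (M *ᵥ x)‖ ≤ ‖M‖ * ‖(WithLp.equiv 2 (Fin n → ℂ)).symm x‖ ^ 2 := by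
  have h1 : star x ⬝ᵥ (M *ᵥ x)
      = inner ℂ ((WithLp.equiv 2 (Fin n → ℂ)).symm x) ((WithLp.equiv 2 (Fin n → ℂ)).symm (M *ᵥ x)) := by
    rw [EuclideanSpace.inner_eq_star_dotProduct]; exact dotProduct_comm _ _
  rw [h1]
  calc ‖inner (𝕜 := ℂ) ((WithLp.equiv 2 (Fin n → ℂ)).symm x) ((WithLp.equiv 2 (Fin n → ℂ)).symm (M *ᵥ x))‖
      ≤ ‖(WithLp.equiv 2 (Fin n → ℂ)).symm x‖ * ‖(WithLp.equiv 2 (Fin n → ℂ)).symm (M *ᵥ x)‖ :=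
        norm_inner_le_norm _ _
    _ ≤ ‖(WithLp.equiv 2 (Fin n → ℂ)).symm x‖ * (‖M‖ * ‖(WithLp.equiv 2 (Fin n → ℂ)).symm x‖) := by
        gcongr
        exact M.l2_opNorm_mulVec _
    _ = ‖M‖ * ‖(WithLp.equiv 2 (Fin n → ℂ)).symm x‖ ^ 2 := by ring

lemma herm_form_star {H : Matrix (Fin n) (Fin n) ℂ} (hH : H.IsHermitian) (x : Fin n → ℂ) :
    star (star x ⬝ᵥ (H *ᵥ x)) = star x ⬝ᵥ (H *ᵥ x) := by
  conv_lhs => rw [← Matrix.star_dotProduct, Matrix.star_mulVec,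
    ← Matrix.dotProduct_mulVec, hH.eq]

lemma posSemidef_smul_one_add {K : Matrix (Fin n) (Fin n) ℂ} (hK : K.IsHermitian) {r : ℝ}
    (hKr : ‖K‖ ≤ r) : (((r : ℂ)) • 1 + K).PosSemidef := by
  rw [Matrix.posSemidef_iff_dotProduct_mulVec]
  constructor
  · apply Matrix.IsHermitian.add _ hK
    rw [Matrix.IsHermitian, Matrix.conjTranspose_smul, Matrix.conjTranspose_one]
    norm_num
  · intro x
    have hmv : ((r : ℂ) • 1 + K) *ᵥ x = (r : ℂ) • x + K *ᵥ x := by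
      rw [Matrix.add_mulVec, Matrix.smul_mulVec, Matrix.one_mulVec]
    rw [hmv, dotProduct_add, dotProduct_smul]
    set z := star x ⬝ᵥ (K *ᵥ x) with hz
    set N := ‖(WithLp.equiv 2 (Fin n → ℂ)).symm x‖ with hN
    have hxx : star x ⬝ᵥ x = ((N^2 : ℝ) : ℂ) := by
      have h0 : star x ⬝ᵥ x = inner (𝕜 := ℂ) ((WithLp.equiv 2 (Fin n → ℂ)).symm x)
          ((WithLp.equiv 2 (Fin n → ℂ)).symm x) := by
        rw [EuclideanSpace.inner_eq_star_dotProduct]; exact dotProduct_comm _ _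
      rw [h0, inner_self_eq_norm_sq_to_K]
      norm_cast
    have habs : ‖z‖ ≤ ‖K‖ * N ^ 2 := abs_form_le K x
    have hstar : star z = z := herm_form_star hK x
    have him : z.im = 0 := by
      have := congrArg Complex.im hstar
      simp only [Complex.star_def, Complex.conj_im] at this
      linarith
    have hzre : z = ((z.re : ℝ) : ℂ) := Complex.ext rfl (by simp [him])
    rw [hxx, hzre, smul_eq_mul, ← Complex.ofReal_mul, ← Complex.ofReal_add]
    rw [Complex.zero_le_real]
    have hre : -(‖z‖) ≤ z.re := by
      have h1 := Complex.abs_re_le_norm z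
      cases' abs_le.mp h1 with h _
      linarith
    have hKnn : (0:ℝ) ≤ ‖K‖ := norm_nonneg _
    have hN0 : 0 ≤ N := norm_nonneg _
    nlinarith [mul_le_mul_of_nonneg_right hKr (sq_nonneg N)]

lemma posSemidef_real_smul_one {r : ℝ} (hr : 0 ≤ r) :
    (((r : ℂ)) • (1 : Matrix (Fin n) (Fin n) ℂ)).PosSemidef := by
  have := posSemidef_smul_one_add (K := (0 : Matrix (Fin n) (Fin n) ℂ))
    (by simp [Matrix.IsHermitian]) (r := r) (by simpa using hr)
  simpa using this

lemma posSemidef_sum {ι : Type*} (s : Finset ι) (f : ι → Matrix (Fin n) (Fin n) ℂ)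
    (h : ∀ i ∈ s, (f i).PosSemidef) : (∑ i ∈ s, f i).PosSemidef := by
  induction s using Finset.cons_induction with
  | empty => simpa using Matrix.PosSemidef.zero
  | cons a s ha ih =>
      rw [Finset.sum_cons]
      exact (h a (Finset.mem_cons_self a s)).add (ih fun i hi => h i (Finset.mem_cons_of_mem hi))

lemma sum_offDiag_eq {M : Type*} [AddCommGroup M] (f : Fin d → Fin d → M) :
    ∑ p ∈ Finset.univ.offDiag, f p.1 p.2 = (∑ i, ∑ j, f i j) - ∑ i, f i i := by
  have h1 : (∑ i, ∑ j, f i j) = ∑ p ∈ Finset.univ ×ˢ Finset.univ, f p.1 p.2 := by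
    rw [Finset.sum_product]
  rw [h1, ← Finset.diag_union_offDiag, Finset.sum_union (Finset.disjoint_diag_offDiag _),
    Finset.sum_diag]
  abel

/-! ### Hermiticity -/

lemma hermRe (A : Matrix (Fin n) (Fin n) ℂ) : (mRe A).IsHermitian := by
  unfold mRe
  rw [Matrix.IsHermitian, conjTranspose_smul, conjTranspose_add, conjTranspose_conjTranspose]
  rw [show star (1/2 : ℂ) = (1/2 : ℂ) by norm_num]
  rw [add_comm]

lemma hermIm (A : Matrix (Fin n) (Fin n) ℂ) : (mIm A).IsHermitian := by
  unfold mIm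
  rw [Matrix.IsHermitian, conjTranspose_smul, conjTranspose_sub, conjTranspose_conjTranspose]
  have hs : star (1/(2 * Complex.I) : ℂ) = -(1/(2 * Complex.I)) := by
    have h0 : (1/(2 * Complex.I) : ℂ) = -Complex.I/2 := by
      have h2 : (2 * Complex.I : ℂ) ≠ 0 := by simp [Complex.I_ne_zero]
      field_simp
      linear_combination Complex.I_sq
    rw [h0]
    simp [Complex.star_def]
    ring
  rw [hs, neg_smul, smul_sub, smul_sub, neg_sub]

lemma herm_sq {M : Matrix (Fin n) (Fin n) ℂ} (h : M.IsHermitian) : (M * M).IsHermitian := by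
  rw [Matrix.IsHermitian, conjTranspose_mul, h.eq]

lemma herm_sum {ι : Type*} (s : Finset ι) (f : ι → Matrix (Fin n) (Fin n) ℂ)
    (h : ∀ i ∈ s, (f i).IsHermitian) : (∑ i ∈ s, f i).IsHermitian := by
  rw [Matrix.IsHermitian, Matrix.conjTranspose_sum]
  exact Finset.sum_congr rfl fun i hi => (h i hi).eq

/-! ### The auxiliary matrices -/

def CC (A : Fin d → Matrix (Fin n) (Fin n) ℂ) (i : Fin d) : Matrix (Fin n) (Fin n) ℂ := 1 - A i

def EE (A : Fin d → Matrix (Fin n) (Fin n) ℂ) (j : Fin d) : Matrix (Fin n) (Fin n) ℂ :=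
  (1/2 : ℂ) • (A j * (A j)ᴴ + (A j)ᴴ * A j) - 1

def PP (A : Fin d → Matrix (Fin n) (Fin n) ℂ) (j : Fin d) : Matrix (Fin n) (Fin n) ℂ :=
  1 - mRe (A j)

def QQ (A : Fin d → Matrix (Fin n) (Fin n) ℂ) (j : Fin d) : Matrix (Fin n) (Fin n) ℂ :=
  (1/4 : ℂ) • (CC A j * (CC A j)ᴴ + (CC A j)ᴴ * CC A j)

def TT (A : Fin d → Matrix (Fin n) (Fin n) ℂ) (i j : Fin d) : Matrix (Fin n) (Fin n) ℂ :=
  ((1/4:ℂ) • (CC A i * CC A j)) * ((1/4:ℂ) • (CC A i * CC A j))ᴴ +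
  ((1/4:ℂ) • (CC A i * (CC A j)ᴴ)) * ((1/4:ℂ) • (CC A i * (CC A j)ᴴ))ᴴ +
  ((1/4:ℂ) • ((CC A i)ᴴ * CC A j)) * ((1/4:ℂ) • ((CC A i)ᴴ * CC A j))ᴴ +
  ((1/4:ℂ) • ((CC A i)ᴴ * (CC A j)ᴴ)) * ((1/4:ℂ) • ((CC A i)ᴴ * (CC A j)ᴴ))ᴴ

def KK (A : Fin d → Matrix (Fin n) (Fin n) ℂ) (i j : Fin d) : Matrix (Fin n) (Fin n) ℂ :=
  PP A i * PP A j - TT A i j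

/-! ### Exact algebraic identities -/

lemma id1 (A : Fin d → Matrix (Fin n) (Fin n) ℂ) (j : Fin d) :
    mIm (A j) * mIm (A j) = 1 + EE A j - mRe (A j) * mRe (A j) := by
  unfold mIm mRe EE
  rw [smul_mul_assoc, smul_mul_assoc, mul_smul_comm, mul_smul_comm, smul_smul, smul_smul]
  have h : (1/(2 * Complex.I) : ℂ) * (1/(2 * Complex.I)) = -(1/4) := by
    rw [div_mul_div_comm]
    rw [show (2 * Complex.I) * (2 * Complex.I) = 4 * (Complex.I * Complex.I) by ring,
      Complex.I_mul_I]
    norm_num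
  rw [h, mul_sub, sub_mul, sub_mul, mul_add, add_mul, add_mul]
  module

lemma idPQ (A : Fin d → Matrix (Fin n) (Fin n) ℂ) (j : Fin d) :
    QQ A j = PP A j + (1/2 : ℂ) • EE A j := by
  unfold QQ PP EE CC mRe
  simp only [conjTranspose_sub, conjTranspose_one, mul_sub, sub_mul, mul_add, add_mul,
    mul_one, one_mul, smul_sub, smul_add]
  module

lemma idEE (A : Fin d → Matrix (Fin n) (Fin n) ℂ) (j : Fin d) :
    EE A j = (1/2 : ℂ) • ((A j * (A j)ᴴ - 1) + ((A j)ᴴ * A j - 1)) := by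
  unfold EE
  simp only [smul_sub, smul_add]
  module

lemma idQT (A : Fin d → Matrix (Fin n) (Fin n) ℂ) (i j : Fin d) :
    QQ A i * QQ A j - TT A i j =
      (1/16 : ℂ) •
        (CC A i * ((CC A i)ᴴ * (CC A j * (CC A j)ᴴ) - (CC A j * (CC A j)ᴴ) * (CC A i)ᴴ) +
         CC A i * ((CC A i)ᴴ * ((CC A j)ᴴ * CC A j) - ((CC A j)ᴴ * CC A j) * (CC A i)ᴴ) +
         (CC A i)ᴴ * (CC A i * (CC A j * (CC A j)ᴴ) - (CC A j * (CC A j)ᴴ) * CC A i) +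
         (CC A i)ᴴ * (CC A i * ((CC A j)ᴴ * CC A j) - ((CC A j)ᴴ * CC A j) * CC A i)) := by
  unfold QQ TT
  simp only [conjTranspose_smul, conjTranspose_mul, conjTranspose_conjTranspose]
  have hs : star (1/4 : ℂ) = (1/4 : ℂ) := by norm_num
  rw [hs]
  simp only [smul_mul_assoc, mul_smul_comm, smul_smul, mul_add, add_mul, mul_sub, sub_mul,
    smul_add, smul_sub, mul_assoc]
  module

lemma idPPQQ (A : Fin d → Matrix (Fin n) (Fin n) ℂ) (i j : Fin d) :
    PP A i * PP A j - QQ A i * QQ A j =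
      (-(1/2 : ℂ) • EE A i) * PP A j + QQ A i * (-(1/2 : ℂ) • EE A j) := by
  rw [idPQ A i, idPQ A j]
  simp only [neg_smul, neg_mul, mul_neg, add_mul, mul_add, smul_mul_assoc, mul_smul_comm]
  abel

lemma idMain (A : Fin d → Matrix (Fin n) (Fin n) ℂ) :
    (∑ j, mIm (A j) * mIm (A j)) +
      ((((d : ℂ) - 1) • (1 : Matrix (Fin n) (Fin n) ℂ) - ∑ j, mRe (A j)) *
        (((d : ℂ) - 1) • (1 : Matrix (Fin n) (Fin n) ℂ) - ∑ j, mRe (A j))) =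
      1 + (∑ j, EE A j) + ∑ p ∈ Finset.univ.offDiag, PP A p.1 * PP A p.2 := by
  rw [sum_offDiag_eq (f := fun i j => PP A i * PP A j)]
  rw [← Finset.sum_mul_sum]
  have h1 : ∑ j, mIm (A j) * mIm (A j) = ∑ j, (1 + EE A j - mRe (A j) * mRe (A j)) :=
    Finset.sum_congr rfl fun j _ => id1 A j
  have h2 : ∀ j : Fin d, PP A j * PP A j = 1 - mRe (A j) - mRe (A j) + mRe (A j) * mRe (A j) := by
    intro j; unfold PP; noncomm_ring
  have h3 : ∑ j : Fin d, PP A j * PP A j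
      = ∑ j, (1 - mRe (A j) - mRe (A j) + mRe (A j) * mRe (A j)) :=
    Finset.sum_congr rfl fun j _ => h2 j
  have h4 : ∑ j : Fin d, PP A j = ∑ j, (1 - mRe (A j)) := rfl
  rw [h1, h3, h4]
  simp only [Finset.sum_add_distrib, Finset.sum_sub_distrib, Finset.sum_const,
    Finset.card_univ, Fintype.card_fin]
  set T := ∑ j, mRe (A j) with hT
  set RR := ∑ j, mRe (A j) * mRe (A j) with hRR
  set Es := ∑ j, EE A j with hEs
  rw [show (d • (1 : Matrix (Fin n) (Fin n) ℂ)) = (d : ℂ) • 1 from (Nat.cast_smul_eq_nsmul ℂ d 1).symm]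
  simp only [mul_add, add_mul, mul_sub, sub_mul, smul_mul_assoc, mul_smul_comm, smul_smul,
    smul_sub, smul_add, mul_one, one_mul, sub_smul, one_smul]
  module

/-! ### Norm bounds -/

section Bounds
variable (A : Fin d → Matrix (Fin n) (Fin n) ℂ) (δ : ℝ)
  (hδ0 : 0 < δ) (hδ : δ ≤ 1/15)
  (h1 : ∀ j, ‖A j * (A j)ᴴ - 1‖ ≤ δ)
  (h2 : ∀ j, ‖(A j)ᴴ * A j - 1‖ ≤ δ)
  (h3 : ∀ i j, ‖A j * A i - A i * A j‖ ≤ δ)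

include hδ0 hδ h2 in
lemma nA : ∀ j, ‖A j‖ ≤ 21/20 := by
  intro j
  have hsq : ‖A j‖ * ‖A j‖ = ‖(A j)ᴴ * A j‖ := (Matrix.l2_opNorm_conjTranspose_mul_self _).symm
  have hb : ‖(A j)ᴴ * A j‖ ≤ δ + 1 := by
    calc ‖(A j)ᴴ * A j‖ = ‖((A j)ᴴ * A j - 1) + 1‖ := by rw [sub_add_cancel]
      _ ≤ ‖(A j)ᴴ * A j - 1‖ + ‖(1 : Matrix (Fin n) (Fin n) ℂ)‖ := norm_add_le _ _
      _ ≤ δ + 1 := by have := h2 j; have := norm_one_le' (n := n); linarith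
  nlinarith [norm_nonneg (A j)]

variable (nA' : ∀ j, ‖A j‖ ≤ 21/20)

include h1 h2 hδ0 in
lemma nE : ∀ j, ‖EE A j‖ ≤ δ := by
  intro j
  rw [idEE A j, norm_smul]
  have : ‖(1/2 : ℂ)‖ = 1/2 := by norm_num
  rw [this]
  have := norm_add_le (A j * (A j)ᴴ - 1) ((A j)ᴴ * A j - 1)
  have := h1 j; have := h2 j
  linarith

include nA' in
lemma nC : ∀ j, ‖CC A j‖ ≤ 41/20 := by
  intro j
  unfold CC
  calc ‖1 - A j‖ ≤ ‖(1 : Matrix (Fin n) (Fin n) ℂ)‖ + ‖A j‖ := norm_sub_le _ _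
    _ ≤ 1 + 21/20 := by have := norm_one_le' (n := n); have := nA' j; linarith
    _ = 41/20 := by norm_num

include nA' in
lemma nP : ∀ j, ‖PP A j‖ ≤ 41/20 := by
  intro j
  unfold PP mRe
  calc ‖1 - (1/2:ℂ) • (A j + (A j)ᴴ)‖ ≤ ‖(1 : Matrix (Fin n) (Fin n) ℂ)‖ + ‖(1/2:ℂ) • (A j + (A j)ᴴ)‖ :=
      norm_sub_le _ _
    _ ≤ 1 + 1/2 * (‖A j‖ + ‖(A j)ᴴ‖) := by
        rw [norm_smul, show ‖(1/2 : ℂ)‖ = 1/2 by norm_num]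
        have := norm_add_le (A j) ((A j)ᴴ)
        have := norm_one_le' (n := n)
        nlinarith [norm_nonneg (A j + (A j)ᴴ)]
    _ ≤ 41/20 := by
        rw [Matrix.l2_opNorm_conjTranspose]
        have := nA' j; linarith

include nA' in
lemma nQ : ∀ j, ‖QQ A j‖ ≤ 11/5 := by
  intro j
  have hC := nC A nA' j
  have hC0 : (0:ℝ) ≤ ‖CC A j‖ := norm_nonneg _
  unfold QQ
  rw [norm_smul, show ‖(1/4 : ℂ)‖ = 1/4 by norm_num]
  have ht : ‖CC A j * (CC A j)ᴴ + (CC A j)ᴴ * CC A j‖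
      ≤ ‖CC A j‖ * ‖(CC A j)ᴴ‖ + ‖(CC A j)ᴴ‖ * ‖CC A j‖ := by
    calc ‖CC A j * (CC A j)ᴴ + (CC A j)ᴴ * CC A j‖
        ≤ ‖CC A j * (CC A j)ᴴ‖ + ‖(CC A j)ᴴ * CC A j‖ := norm_add_le _ _
      _ ≤ ‖CC A j‖ * ‖(CC A j)ᴴ‖ + ‖(CC A j)ᴴ‖ * ‖CC A j‖ := by
          have := norm_mul_le (CC A j) ((CC A j)ᴴ)
          have := norm_mul_le ((CC A j)ᴴ) (CC A j)
          linarith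
  rw [Matrix.l2_opNorm_conjTranspose] at ht
  nlinarith

include h3 in
lemma cAA : ∀ i j, ‖A i * A j - A j * A i‖ ≤ δ := fun i j => h3 j i

include h3 in
lemma cHH : ∀ i j, ‖(A i)ᴴ * (A j)ᴴ - (A j)ᴴ * (A i)ᴴ‖ ≤ δ := by
  intro i j
  have key : (A i)ᴴ * (A j)ᴴ - (A j)ᴴ * (A i)ᴴ = (A j * A i - A i * A j)ᴴ := by
    simp [conjTranspose_sub, conjTranspose_mul]
  rw [key, Matrix.l2_opNorm_conjTranspose]
  exact h3 i j

include h1 h2 h3 nA' hδ0 in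
lemma cHA : ∀ i j, ‖(A i)ᴴ * A j - A j * (A i)ᴴ‖ ≤ 7/2 * δ := by
  intro i j
  have key : (A i)ᴴ * A j - A j * (A i)ᴴ =
      (A i)ᴴ * (A j * A i - A i * A j) * (A i)ᴴ - (A i)ᴴ * A j * (A i * (A i)ᴴ - 1)
        + ((A i)ᴴ * A i - 1) * (A j * (A i)ᴴ) := by noncomm_ring
  have hAi := nA' i; have hAj := nA' j
  have hAiH : ‖(A i)ᴴ‖ ≤ 21/20 := normH_le hAi
  have b1 : ‖(A i)ᴴ * (A j * A i - A i * A j) * (A i)ᴴ‖ ≤ 21/20 * δ * (21/20) :=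
    norm_mul_le_of_le (norm_mul_le_of_le hAiH (h3 i j)) hAiH
  have b2 : ‖(A i)ᴴ * A j * (A i * (A i)ᴴ - 1)‖ ≤ 21/20 * (21/20) * δ :=
    norm_mul_le_of_le (norm_mul_le_of_le hAiH hAj) (h1 i)
  have b3 : ‖((A i)ᴴ * A i - 1) * (A j * (A i)ᴴ)‖ ≤ δ * (21/20 * (21/20)) :=
    norm_mul_le_of_le (h2 i) (norm_mul_le_of_le hAj hAiH)
  rw [key]
  have t1 := norm_add_le ((A i)ᴴ * (A j * A i - A i * A j) * (A i)ᴴ - (A i)ᴴ * A j * (A i * (A i)ᴴ - 1))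
    (((A i)ᴴ * A i - 1) * (A j * (A i)ᴴ))
  have t2 := norm_sub_le ((A i)ᴴ * (A j * A i - A i * A j) * (A i)ᴴ)
    ((A i)ᴴ * A j * (A i * (A i)ᴴ - 1))
  nlinarith

include h1 h2 h3 nA' hδ0 in
lemma cAH : ∀ i j, ‖A i * (A j)ᴴ - (A j)ᴴ * A i‖ ≤ 7/2 * δ := by
  intro i j
  rw [norm_sub_rev]
  exact cHA A δ hδ0 h1 h2 h3 nA' j i

end Bounds

lemma comm_mul_bound {Z a b : Matrix (Fin n) (Fin n) ℂ} {ca cb M : ℝ}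
    (hZa : ‖Z*a - a*Z‖ ≤ ca) (hZb : ‖Z*b - b*Z‖ ≤ cb) (hna : ‖a‖ ≤ M) (hnb : ‖b‖ ≤ M) :
    ‖Z*(a*b) - (a*b)*Z‖ ≤ M*(ca+cb) := by
  have key : Z*(a*b) - (a*b)*Z = (Z*a - a*Z)*b + a*(Z*b - b*Z) := by noncomm_ring
  rw [key]
  have t1 := norm_add_le ((Z*a - a*Z)*b) (a*(Z*b - b*Z))
  have t2 : ‖(Z*a - a*Z)*b‖ ≤ ca * M := norm_mul_le_of_le hZa hnb
  have t3 : ‖a*(Z*b - b*Z)‖ ≤ M * cb := norm_mul_le_of_le hna hZb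
  linarith

section Bounds2
variable (A : Fin d → Matrix (Fin n) (Fin n) ℂ) (δ : ℝ)
  (hδ0 : 0 < δ) (hδ : δ ≤ 1/15)
  (cAA' : ∀ i j, ‖A i * A j - A j * A i‖ ≤ δ)
  (cHH' : ∀ i j, ‖(A i)ᴴ * (A j)ᴴ - (A j)ᴴ * (A i)ᴴ‖ ≤ δ)
  (cHA' : ∀ i j, ‖(A i)ᴴ * A j - A j * (A i)ᴴ‖ ≤ 7/2 * δ)
  (cAH' : ∀ i j, ‖A i * (A j)ᴴ - (A j)ᴴ * A i‖ ≤ 7/2 * δ)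
  (nC' : ∀ j, ‖CC A j‖ ≤ 41/20)
  (nP' : ∀ j, ‖PP A j‖ ≤ 41/20)
  (nQ' : ∀ j, ‖QQ A j‖ ≤ 11/5)
  (nE' : ∀ j, ‖EE A j‖ ≤ δ)

include hδ0 cAA' in
lemma cCC : ∀ i j, ‖CC A i * CC A j - CC A j * CC A i‖ ≤ 7/2 * δ := by
  intro i j
  have key : CC A i * CC A j - CC A j * CC A i = A i * A j - A j * A i := by
    unfold CC; noncomm_ring
  rw [key]; have := cAA' i j; linarith

include cAH' in
lemma cCCH : ∀ i j, ‖CC A i * (CC A j)ᴴ - (CC A j)ᴴ * CC A i‖ ≤ 7/2 * δ := by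
  intro i j
  have hCH : (CC A j)ᴴ = 1 - (A j)ᴴ := by unfold CC; simp
  have key : CC A i * (CC A j)ᴴ - (CC A j)ᴴ * CC A i = A i * (A j)ᴴ - (A j)ᴴ * A i := by
    rw [hCH]; unfold CC; noncomm_ring
  rw [key]; exact cAH' i j

include cHA' in
lemma cCHC : ∀ i j, ‖(CC A i)ᴴ * CC A j - CC A j * (CC A i)ᴴ‖ ≤ 7/2 * δ := by
  intro i j
  have hCH : (CC A i)ᴴ = 1 - (A i)ᴴ := by unfold CC; simp
  have key : (CC A i)ᴴ * CC A j - CC A j * (CC A i)ᴴ = (A i)ᴴ * A j - A j * (A i)ᴴ := by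
    rw [hCH]; unfold CC; noncomm_ring
  rw [key]; exact cHA' i j

include hδ0 cHH' in
lemma cCHCH : ∀ i j, ‖(CC A i)ᴴ * (CC A j)ᴴ - (CC A j)ᴴ * (CC A i)ᴴ‖ ≤ 7/2 * δ := by
  intro i j
  have hCHi : (CC A i)ᴴ = 1 - (A i)ᴴ := by unfold CC; simp
  have hCHj : (CC A j)ᴴ = 1 - (A j)ᴴ := by unfold CC; simp
  have key : (CC A i)ᴴ * (CC A j)ᴴ - (CC A j)ᴴ * (CC A i)ᴴ
      = (A i)ᴴ * (A j)ᴴ - (A j)ᴴ * (A i)ᴴ := by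
    rw [hCHi, hCHj]; noncomm_ring
  rw [key]; have := cHH' i j; linarith

include hδ0 hδ cAA' cHH' cHA' cAH' nC' nP' nQ' nE' in
lemma nKK : ∀ i j, ‖KK A i j‖ ≤ 10 * δ := by
  intro i j
  have hsplit : KK A i j = (PP A i * PP A j - QQ A i * QQ A j) + (QQ A i * QQ A j - TT A i j) := by
    unfold KK; abel
  have hδnn : (0:ℝ) ≤ δ := le_of_lt hδ0
  have p1 : ‖PP A i * PP A j - QQ A i * QQ A j‖ ≤ 17/8 * δ := by
    rw [idPPQQ A i j]
    have b1 : ‖(-(1/2 : ℂ) • EE A i) * PP A j‖ ≤ (1/2 * δ) * (41/20) := by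
      apply norm_mul_le_of_le _ (nP' j)
      rw [norm_smul]
      have : ‖(-(1/2) : ℂ)‖ = 1/2 := by norm_num
      rw [this]
      have := nE' i; nlinarith [norm_nonneg (EE A i)]
    have b2 : ‖QQ A i * (-(1/2 : ℂ) • EE A j)‖ ≤ (11/5) * (1/2 * δ) := by
      apply norm_mul_le_of_le (nQ' i)
      rw [norm_smul]
      have : ‖(-(1/2) : ℂ)‖ = 1/2 := by norm_num
      rw [this]
      have := nE' j; nlinarith [norm_nonneg (EE A j)]
    have := norm_add_le ((-(1/2 : ℂ) • EE A i) * PP A j) (QQ A i * (-(1/2 : ℂ) • EE A j))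
    linarith
  have p2 : ‖QQ A i * QQ A j - TT A i j‖ ≤ 11767/1600 * δ := by
    rw [idQT A i j, norm_smul]
    have h16 : ‖(1/16 : ℂ)‖ = 1/16 := by norm_num
    rw [h16]
    have hC := nC' i
    have hCH : ‖(CC A i)ᴴ‖ ≤ 41/20 := normH_le (nC' i)
    have hCj := nC' j
    have hCjH : ‖(CC A j)ᴴ‖ ≤ 41/20 := normH_le (nC' j)
    have c1 : ‖(CC A i)ᴴ * (CC A j * (CC A j)ᴴ) - (CC A j * (CC A j)ᴴ) * (CC A i)ᴴ‖
        ≤ 41/20 * (7/2 * δ + 7/2 * δ) :=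
      comm_mul_bound (cCHC A δ cHA' i j) (cCHCH A δ hδ0 cHH' i j) hCj hCjH
    have c2 : ‖(CC A i)ᴴ * ((CC A j)ᴴ * CC A j) - ((CC A j)ᴴ * CC A j) * (CC A i)ᴴ‖
        ≤ 41/20 * (7/2 * δ + 7/2 * δ) :=
      comm_mul_bound (cCHCH A δ hδ0 cHH' i j) (cCHC A δ cHA' i j) hCjH hCj
    have c3 : ‖CC A i * (CC A j * (CC A j)ᴴ) - (CC A j * (CC A j)ᴴ) * CC A i‖
        ≤ 41/20 * (7/2 * δ + 7/2 * δ) :=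
      comm_mul_bound (cCC A δ hδ0 cAA' i j) (cCCH A δ cAH' i j) hCj hCjH
    have c4 : ‖CC A i * ((CC A j)ᴴ * CC A j) - ((CC A j)ᴴ * CC A j) * CC A i‖
        ≤ 41/20 * (7/2 * δ + 7/2 * δ) :=
      comm_mul_bound (cCCH A δ cAH' i j) (cCC A δ hδ0 cAA' i j) hCjH hCj
    have m1 : ‖CC A i * ((CC A i)ᴴ * (CC A j * (CC A j)ᴴ) - (CC A j * (CC A j)ᴴ) * (CC A i)ᴴ)‖
        ≤ 41/20 * (41/20 * (7/2 * δ + 7/2 * δ)) := norm_mul_le_of_le hC c1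
    have m2 : ‖CC A i * ((CC A i)ᴴ * ((CC A j)ᴴ * CC A j) - ((CC A j)ᴴ * CC A j) * (CC A i)ᴴ)‖
        ≤ 41/20 * (41/20 * (7/2 * δ + 7/2 * δ)) := norm_mul_le_of_le hC c2
    have m3 : ‖(CC A i)ᴴ * (CC A i * (CC A j * (CC A j)ᴴ) - (CC A j * (CC A j)ᴴ) * CC A i)‖
        ≤ 41/20 * (41/20 * (7/2 * δ + 7/2 * δ)) := norm_mul_le_of_le hCH c3
    have m4 : ‖(CC A i)ᴴ * (CC A i * ((CC A j)ᴴ * CC A j) - ((CC A j)ᴴ * CC A j) * CC A i)‖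
        ≤ 41/20 * (41/20 * (7/2 * δ + 7/2 * δ)) := norm_mul_le_of_le hCH c4
    set X1 := CC A i * ((CC A i)ᴴ * (CC A j * (CC A j)ᴴ) - (CC A j * (CC A j)ᴴ) * (CC A i)ᴴ)
    set X2 := CC A i * ((CC A i)ᴴ * ((CC A j)ᴴ * CC A j) - ((CC A j)ᴴ * CC A j) * (CC A i)ᴴ)
    set X3 := (CC A i)ᴴ * (CC A i * (CC A j * (CC A j)ᴴ) - (CC A j * (CC A j)ᴴ) * CC A i)
    set X4 := (CC A i)ᴴ * (CC A i * ((CC A j)ᴴ * CC A j) - ((CC A j)ᴴ * CC A j) * CC A i)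
    have t1 := norm_add_le (X1 + X2 + X3) X4
    have t2 := norm_add_le (X1 + X2) X3
    have t3 := norm_add_le X1 X2
    nlinarith
  rw [hsplit]
  have := norm_add_le (PP A i * PP A j - QQ A i * QQ A j) (QQ A i * QQ A j - TT A i j)
  nlinarith

end Bounds2

end Stmt19Aux

open Stmt19Aux in
/-- if `A_1, …, A_d` form a fuzzy `d`-torus of width `δ ∈ (0, 1/2]`, then
`∑ Im(A_j)² + ((d-1)·1 - ∑ Re(A_j))² ≥ (1 - 15 d² δ)·1` in the Loewner order. -/
theorem stmt19 {n : ℕ} (d : ℕ) (hd : 1 ≤ d) (δ : ℝ) (hδ0 : 0 < δ) (hδ : δ ≤ 1/2)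
    (A : Fin d → Matrix (Fin n) (Fin n) ℂ)
    (hinv : ∀ j, IsUnit (A j))
    (h1 : ∀ j, ‖A j * (A j)ᴴ - 1‖ ≤ δ)
    (h2 : ∀ j, ‖(A j)ᴴ * A j - 1‖ ≤ δ)
    (h3 : ∀ i j, ‖A j * A i - A i * A j‖ ≤ δ) :
    ((∑ j : Fin d, mIm (A j) * mIm (A j)) +
      ((((d : ℂ) - 1) • (1 : Matrix (Fin n) (Fin n) ℂ) - ∑ j : Fin d, mRe (A j)) *
        (((d : ℂ) - 1) • (1 : Matrix (Fin n) (Fin n) ℂ) - ∑ j : Fin d, mRe (A j))) -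
      ((1 - 15 * d^2 * δ : ℝ) : ℂ) • 1).PosSemidef := by
  classical
  set S1 := ∑ j : Fin d, mIm (A j) * mIm (A j) with hS1def
  set B := ((d : ℂ) - 1) • (1 : Matrix (Fin n) (Fin n) ℂ) - ∑ j : Fin d, mRe (A j) with hBdef
  have hermB : B.IsHermitian := by
    rw [hBdef]
    apply Matrix.IsHermitian.sub
    · rw [Matrix.IsHermitian, conjTranspose_smul, conjTranspose_one]
      congr 1
      simp
    · exact herm_sum _ _ fun j _ => hermRe (A j)
  have hSB : (S1 + B * B).PosSemidef := by
    have hS1p : S1.PosSemidef := by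
      rw [hS1def]
      apply Stmt19Aux.posSemidef_sum
      intro j _
      rw [show mIm (A j) * mIm (A j) = mIm (A j) * (mIm (A j))ᴴ by rw [(hermIm (A j)).eq]]
      exact Matrix.posSemidef_self_mul_conjTranspose _
    have hBBp : (B * B).PosSemidef := by
      rw [show B * B = B * Bᴴ by rw [hermB.eq]]
      exact Matrix.posSemidef_self_mul_conjTranspose _
    exact hS1p.add hBBp
  by_cases hc : 1 - 15 * (d:ℝ)^2 * δ ≤ 0
  · have hkey : S1 + B * B - ((1 - 15 * d^2 * δ : ℝ) : ℂ) • 1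
        = (S1 + B * B) + ((15 * (d:ℝ)^2 * δ - 1 : ℝ) : ℂ) • 1 := by
      push_cast
      module
    rw [hkey]
    exact hSB.add (posSemidef_real_smul_one (by linarith))
  · push_neg at hc
    have hd1 : (1:ℝ) ≤ (d:ℝ) := by exact_mod_cast hd
    have hδ15 : δ ≤ 1/15 := by nlinarith
    have hnA := nA A δ hδ0 hδ15 h2
    have hnE := nE A δ hδ0 h1 h2
    have hnC := nC A hnA
    have hnP := nP A hnA
    have hnQ := nQ A hnA
    have hcAA := cAA A δ h3
    have hcHH := cHH A δ h3
    have hcHA := cHA A δ hδ0 h1 h2 h3 hnA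
    have hcAH := cAH A δ hδ0 h1 h2 h3 hnA
    have hnKK := nKK A δ hδ0 hδ15 hcAA hcHH hcHA hcAH hnC hnP hnQ hnE
    set PSDsum := ∑ p ∈ (Finset.univ : Finset (Fin d)).offDiag, TT A p.1 p.2 with hPSDdef
    set Ksum2 := ∑ p ∈ (Finset.univ : Finset (Fin d)).offDiag, KK A p.1 p.2 with hKsum2def
    set Es := ∑ j : Fin d, EE A j with hEsdef
    have hPSD : PSDsum.PosSemidef := by
      rw [hPSDdef]
      apply Stmt19Aux.posSemidef_sum
      intro p _
      unfold TT
      exact (((Matrix.posSemidef_self_mul_conjTranspose _).add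
        (Matrix.posSemidef_self_mul_conjTranspose _)).add
        (Matrix.posSemidef_self_mul_conjTranspose _)).add
        (Matrix.posSemidef_self_mul_conjTranspose _)
    have hsum : (∑ p ∈ (Finset.univ : Finset (Fin d)).offDiag, PP A p.1 * PP A p.2)
        = PSDsum + Ksum2 := by
      rw [hPSDdef, hKsum2def, ← Finset.sum_add_distrib]
      apply Finset.sum_congr rfl
      intro p _
      unfold KK
      abel
    have hgoal_eq : S1 + B * B - ((1 - 15 * d^2 * δ : ℝ) : ℂ) • 1
        = PSDsum + (((15 * (d:ℝ)^2 * δ : ℝ) : ℂ) • 1 + (Es + Ksum2)) := by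
      rw [hS1def, hBdef, idMain A, hsum, ← hEsdef]
      push_cast
      module
    have hKherm : (Es + Ksum2).IsHermitian := by
      have hKeq : Es + Ksum2 = (S1 + B * B - ((1 - 15 * d^2 * δ : ℝ) : ℂ) • 1)
          - PSDsum - ((15 * (d:ℝ)^2 * δ : ℝ) : ℂ) • 1 := by
        rw [hgoal_eq]; abel
      rw [hKeq]
      have hermc : ((((1 - 15 * d^2 * δ : ℝ)) : ℂ) • (1 : Matrix (Fin n) (Fin n) ℂ)).IsHermitian := by
        rw [Matrix.IsHermitian, conjTranspose_smul, conjTranspose_one]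
        congr 1
        simp [Complex.star_def, Complex.conj_ofReal]
      have hermr : ((((15 * (d:ℝ)^2 * δ : ℝ)) : ℂ) • (1 : Matrix (Fin n) (Fin n) ℂ)).IsHermitian := by
        rw [Matrix.IsHermitian, conjTranspose_smul, conjTranspose_one]
        congr 1
        simp [Complex.star_def, Complex.conj_ofReal]
      exact ((hSB.1.sub hermc).sub hPSD.1).sub hermr
    have hKnorm : ‖Es + Ksum2‖ ≤ 15 * (d:ℝ)^2 * δ := by
      have tE : ‖Es‖ ≤ (d:ℝ) * δ := by
        rw [hEsdef]
        calc ‖∑ j : Fin d, EE A j‖ ≤ ∑ j : Fin d, ‖EE A j‖ := norm_sum_le _ _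
          _ ≤ ∑ _j : Fin d, δ := Finset.sum_le_sum fun j _ => hnE j
          _ = (d:ℝ) * δ := by
              rw [Finset.sum_const, Finset.card_univ, Fintype.card_fin, nsmul_eq_mul]
      have hcard : (((Finset.univ : Finset (Fin d)).offDiag.card : ℝ)) ≤ (d:ℝ) * (d:ℝ) := by
        have h : (Finset.univ : Finset (Fin d)).offDiag.card ≤ d * d := by
          calc (Finset.univ : Finset (Fin d)).offDiag.card
              ≤ ((Finset.univ : Finset (Fin d)) ×ˢ (Finset.univ : Finset (Fin d))).card := by
                apply Finset.card_le_card
                intro p hp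
                simp
            _ = d * d := by simp [Finset.card_product]
        calc (((Finset.univ : Finset (Fin d)).offDiag.card : ℝ)) ≤ ((d*d : ℕ) : ℝ) := by
              exact_mod_cast h
          _ = (d:ℝ) * (d:ℝ) := by push_cast; ring
      have tK : ‖Ksum2‖ ≤ ((d:ℝ) * (d:ℝ)) * (10 * δ) := by
        rw [hKsum2def]
        calc ‖∑ p ∈ (Finset.univ : Finset (Fin d)).offDiag, KK A p.1 p.2‖
            ≤ ∑ p ∈ (Finset.univ : Finset (Fin d)).offDiag, ‖KK A p.1 p.2‖ :=
              norm_sum_le _ _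
          _ ≤ ∑ _p ∈ (Finset.univ : Finset (Fin d)).offDiag, (10 * δ) :=
              Finset.sum_le_sum fun p _ => hnKK p.1 p.2
          _ = ((Finset.univ : Finset (Fin d)).offDiag.card : ℝ) * (10 * δ) := by
              rw [Finset.sum_const, nsmul_eq_mul]
          _ ≤ ((d:ℝ) * (d:ℝ)) * (10 * δ) := by
              apply mul_le_mul_of_nonneg_right hcard
              nlinarith
      have hna := norm_add_le Es Ksum2
      have hprod : (0:ℝ) ≤ ((d:ℝ) * δ) * (5 * (d:ℝ) - 1) :=
        mul_nonneg (mul_nonneg (by linarith) hδ0.le) (by linarith)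
      nlinarith
    rw [hgoal_eq]
    exact hPSD.add (posSemidef_smul_one_add hKherm hKnorm)
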